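/- arXiv:2412.03828 — 2 statements merged into one kernel-verified Lean document; each statement's English description precedes it below -/
import Mathlib

section
/- Let d ≥ 1, λ ∈ ℂ with Im λ ≠ 0, and f ∈ 𝓢(ℝ^{1+d}, ℂ). Then 4π²·q(ζ) + λ ≠ 0 for every ζ ∈ ℝ^{1+d}, the function ζ ↦ −(Ff)(ζ)/(4π²·q(ζ) + λ) belongs to 𝓢(ℝ^{1+d}, ℂ), and the Schwartz function u := F⁻¹( ζ ↦ −(Ff)(ζ)/(4π²·q(ζ) + λ) ) satisfies □u = λu + f. -/
open MeasureTheory SchwartzMap Complex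
open scoped SchwartzMap

abbrev Spacetime (d : ℕ) := EuclideanSpace ℝ (Fin (d + 1))

/-- The d'Alembertian `□f = ∂_t² f − Σ_{j=1}^d ∂_{x_j}² f` as a continuous linear operator
on the Schwartz space `𝓢(ℝ^{1+d}, ℂ)`. -/
noncomputable def dAlembertian (d : ℕ) :
    𝓢(Spacetime d, ℂ) →L[ℂ] 𝓢(Spacetime d, ℂ) :=
  (LineDeriv.lineDerivOpCLM ℂ 𝓢(Spacetime d, ℂ) (EuclideanSpace.single 0 1 : Spacetime d)).comp
      (LineDeriv.lineDerivOpCLM ℂ 𝓢(Spacetime d, ℂ) (EuclideanSpace.single 0 1 : Spacetime d))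
    - ∑ j : Fin d,
      (LineDeriv.lineDerivOpCLM ℂ 𝓢(Spacetime d, ℂ) (EuclideanSpace.single j.succ 1 : Spacetime d)).comp
        (LineDeriv.lineDerivOpCLM ℂ 𝓢(Spacetime d, ℂ) (EuclideanSpace.single j.succ 1 : Spacetime d))
open Real in
/-- The Minkowski quadratic form `q(ζ) = τ² − ‖ξ‖²` in the dual variables
`ζ = (τ, ξ) ∈ ℝ × ℝ^d`. -/
noncomputable def minkQ (d : ℕ) (ζ : Spacetime d) : ℝ :=
  ζ 0 ^ 2 - ∑ j : Fin d, ζ j.succ ^ 2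

section TG

variable {E F G H : Type*} [NormedAddCommGroup E] [NormedSpace ℝ E]
  [NormedAddCommGroup F] [NormedSpace ℝ F] [NormedAddCommGroup G] [NormedSpace ℝ G]
  [NormedAddCommGroup H] [NormedSpace ℝ H]

lemma tg_bilin_bound (B : F →L[ℝ] G →L[ℝ] H) {f : E → F} {g : E → G}
    (hf : ContDiff ℝ (↑(⊤:ℕ∞)) f) (hg : ContDiff ℝ (↑(⊤:ℕ∞)) g) {n k1 k2 : ℕ} {C1 C2 : ℝ}
    (hC1 : 0 ≤ C1) (hC2 : 0 ≤ C2)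
    (h1 : ∀ N ≤ n, ∀ x, ‖iteratedFDeriv ℝ N f x‖ ≤ C1 * (1 + ‖x‖) ^ k1)
    (h2 : ∀ N ≤ n, ∀ x, ‖iteratedFDeriv ℝ N g x‖ ≤ C2 * (1 + ‖x‖) ^ k2) :
    ∀ N ≤ n, ∀ x, ‖iteratedFDeriv ℝ N (fun y => B (f y) (g y)) x‖ ≤
      (‖B‖ * 2 ^ n * (C1 * C2)) * (1 + ‖x‖) ^ (k1 + k2) := by
  intro N hN x
  have hx : (0:ℝ) ≤ 1 + ‖x‖ := by positivity
  have h1x : (1:ℝ) ≤ 1 + ‖x‖ := by simp [norm_nonneg]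
  calc ‖iteratedFDeriv ℝ N (fun y => B (f y) (g y)) x‖
      ≤ ‖B‖ * ∑ i ∈ Finset.range (N + 1),
        (N.choose i : ℝ) * ‖iteratedFDeriv ℝ i f x‖ * ‖iteratedFDeriv ℝ (N - i) g x‖ :=
        B.norm_iteratedFDeriv_le_of_bilinear hf hg x (mod_cast le_top)
    _ ≤ ‖B‖ * ∑ i ∈ Finset.range (N + 1),
        (N.choose i : ℝ) * (C1 * (1 + ‖x‖) ^ k1) * (C2 * (1 + ‖x‖) ^ k2) := by
        apply mul_le_mul_of_nonneg_left ?_ (norm_nonneg B)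
        apply Finset.sum_le_sum
        intro i hi
        have hiN : i ≤ N := Finset.mem_range_succ_iff.mp hi
        have h1' := h1 i (hiN.trans hN) x
        have h2' := h2 (N - i) ((Nat.sub_le N i).trans hN) x
        calc (N.choose i : ℝ) * ‖iteratedFDeriv ℝ i f x‖ * ‖iteratedFDeriv ℝ (N - i) g x‖
            = (N.choose i : ℝ) * (‖iteratedFDeriv ℝ i f x‖ * ‖iteratedFDeriv ℝ (N - i) g x‖) := by
              ring
          _ ≤ (N.choose i : ℝ) * ((C1 * (1 + ‖x‖) ^ k1) * (C2 * (1 + ‖x‖) ^ k2)) := by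
              gcongr
          _ = (N.choose i : ℝ) * (C1 * (1 + ‖x‖) ^ k1) * (C2 * (1 + ‖x‖) ^ k2) := by ring
    _ = ‖B‖ * ((∑ i ∈ Finset.range (N + 1), (N.choose i : ℝ)) *
          ((C1 * (1 + ‖x‖) ^ k1) * (C2 * (1 + ‖x‖) ^ k2))) := by
        rw [← Finset.sum_mul, ← Finset.sum_mul]
        ring
    _ = ‖B‖ * (2 ^ N * ((C1 * (1 + ‖x‖) ^ k1) * (C2 * (1 + ‖x‖) ^ k2))) := by
        rw [show (∑ i ∈ Finset.range (N + 1), (N.choose i : ℝ)) = 2 ^ N by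
          norm_cast; exact Nat.sum_range_choose N]
    _ ≤ ‖B‖ * (2 ^ n * ((C1 * (1 + ‖x‖) ^ k1) * (C2 * (1 + ‖x‖) ^ k2))) := by
        have : (2:ℝ) ^ N ≤ 2 ^ n := by
          apply pow_le_pow_right₀ <;> norm_num [hN]
        have hpos : (0:ℝ) ≤ (C1 * (1 + ‖x‖) ^ k1) * (C2 * (1 + ‖x‖) ^ k2) := by positivity
        have := mul_le_mul_of_nonneg_right this hpos
        nlinarith [norm_nonneg B, this]
    _ = (‖B‖ * 2 ^ n * (C1 * C2)) * (1 + ‖x‖) ^ (k1 + k2) := by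
        rw [pow_add]; ring

lemma tg_bilin (B : F →L[ℝ] G →L[ℝ] H) {f : E → F} {g : E → G}
    (hf : Function.HasTemperateGrowth f) (hg : Function.HasTemperateGrowth g) :
    Function.HasTemperateGrowth (fun x => B (f x) (g x)) := by
  refine ⟨(B.isBoundedBilinearMap.contDiff.restrict_scalars ℝ).comp (hf.1.prodMk hg.1), fun n => ?_⟩
  obtain ⟨k1, C1, hC1, h1⟩ := hf.norm_iteratedFDeriv_le_uniform n
  obtain ⟨k2, C2, hC2, h2⟩ := hg.norm_iteratedFDeriv_le_uniform n
  exact ⟨k1 + k2, ‖B‖ * 2 ^ n * (C1 * C2),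
    fun x => tg_bilin_bound B hf.1 hg.1 hC1 hC2 h1 h2 n le_rfl x⟩

lemma tg_comp_clm (T : F →L[ℝ] G) {g : E → F} (hg : Function.HasTemperateGrowth g) :
    Function.HasTemperateGrowth (fun x => T (g x)) :=
  tg_bilin (ContinuousLinearMap.apply ℝ G) hg (.const T)

lemma tg_add {f g : E → F} (hf : Function.HasTemperateGrowth f)
    (hg : Function.HasTemperateGrowth g) :
    Function.HasTemperateGrowth (fun x => f x + g x) := by
  refine ⟨hf.1.add hg.1, fun n => ?_⟩
  obtain ⟨k1, C1, hC1, h1⟩ := hf.norm_iteratedFDeriv_le_uniform n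
  obtain ⟨k2, C2, hC2, h2⟩ := hg.norm_iteratedFDeriv_le_uniform n
  refine ⟨k1 + k2, C1 + C2, fun x => ?_⟩
  have h1x : (1:ℝ) ≤ 1 + ‖x‖ := by simp [norm_nonneg]
  have hadd : iteratedFDeriv ℝ n (fun x => f x + g x) x
      = iteratedFDeriv ℝ n f x + iteratedFDeriv ℝ n g x := by
    have := iteratedFDeriv_add_apply (f := f) (g := g) (i := n)
      (hf.1.contDiffAt.of_le (WithTop.coe_le_coe.mpr le_top)) (hg.1.contDiffAt.of_le (WithTop.coe_le_coe.mpr le_top)) (x := x)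
    exact this
  calc ‖iteratedFDeriv ℝ n (fun x => f x + g x) x‖
      ≤ ‖iteratedFDeriv ℝ n f x‖ + ‖iteratedFDeriv ℝ n g x‖ := by
        rw [hadd]; exact norm_add_le _ _
    _ ≤ C1 * (1 + ‖x‖) ^ k1 + C2 * (1 + ‖x‖) ^ k2 :=
        add_le_add (h1 n le_rfl x) (h2 n le_rfl x)
    _ ≤ C1 * (1 + ‖x‖) ^ (k1 + k2) + C2 * (1 + ‖x‖) ^ (k1 + k2) := by
        gcongr <;> simp [Nat.le_add_right, Nat.le_add_left]
    _ = (C1 + C2) * (1 + ‖x‖) ^ (k1 + k2) := by ring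

lemma tg_neg {f : E → F} (hf : Function.HasTemperateGrowth f) :
    Function.HasTemperateGrowth (fun x => -f x) := by
  refine ⟨hf.1.neg, fun n => ?_⟩
  obtain ⟨k, C, h⟩ := hf.2 n
  exact ⟨k, C, fun x => by
    rw [show (fun x => -f x) = -f from rfl, iteratedFDeriv_neg_apply, norm_neg]; exact h x⟩

lemma tg_sum {ι : Type*} (s : Finset ι) (f : ι → E → F)
    (h : ∀ i ∈ s, Function.HasTemperateGrowth (f i)) :
    Function.HasTemperateGrowth (fun x => ∑ i ∈ s, f i x) := by
  classical
  induction s using Finset.induction_on with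
  | empty => simpa using Function.HasTemperateGrowth.const (0 : F)
  | @insert a s' hni ih =>
    simp only [Finset.sum_insert hni]
    exact tg_add (h a (Finset.mem_insert_self a s'))
      (ih fun i hi => h i (Finset.mem_insert_of_mem hi))

end TG

section Inv
variable {E : Type*} [NormedAddCommGroup E] [NormedSpace ℝ E]

lemma tg_inv {h : E → ℂ} (hh : Function.HasTemperateGrowth h) {ε : ℝ} (hε : 0 < ε)
    (hl : ∀ x, ε ≤ ‖h x‖) : Function.HasTemperateGrowth (fun x => (h x)⁻¹) := by
  have hne : ∀ x, h x ≠ 0 := by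
    intro x hx
    have := hl x
    rw [hx, norm_zero] at this
    linarith
  have hsm : ContDiff ℝ (↑(⊤:ℕ∞)) (fun x => (h x)⁻¹) := hh.1.inv hne
  have hfd : fderiv ℝ (fun x => (h x)⁻¹) = fun x =>
      (ContinuousLinearMap.lsmul ℝ ℂ (-((h x)⁻¹ * (h x)⁻¹))) (fderiv ℝ h x) := by
    funext x
    have hdh : HasFDerivAt h (fderiv ℝ h x) x :=
      (hh.1.differentiable (by simp)).differentiableAt.hasFDerivAt
    have hinv : HasFDerivAt (fun z : ℂ => z⁻¹)
        (((1 : ℂ →L[ℂ] ℂ).smulRight (-((h x) ^ 2)⁻¹)).restrictScalars ℝ) (h x) :=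
      ((hasDerivAt_inv (hne x)).hasFDerivAt).restrictScalars ℝ
    have hcomp : HasFDerivAt (fun x => (h x)⁻¹)
        ((((1 : ℂ →L[ℂ] ℂ).smulRight (-((h x) ^ 2)⁻¹)).restrictScalars ℝ).comp
          (fderiv ℝ h x)) x := hinv.comp x hdh
    rw [hcomp.fderiv]
    ext v
    simp only [ContinuousLinearMap.coe_comp', Function.comp_apply,
      ContinuousLinearMap.coe_restrictScalars', ContinuousLinearMap.smulRight_apply,
      ContinuousLinearMap.one_apply, ContinuousLinearMap.lsmul_apply,
      ContinuousLinearMap.smul_apply, smul_eq_mul]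
    rw [sq, mul_inv]
    ring
  have claim : ∀ n : ℕ, ∃ (k : ℕ) (C : ℝ), 0 ≤ C ∧ ∀ N ≤ n, ∀ x,
      ‖iteratedFDeriv ℝ N (fun x => (h x)⁻¹) x‖ ≤ C * (1 + ‖x‖) ^ k := by
    intro n
    induction n with
    | zero =>
      refine ⟨0, ε⁻¹, by positivity, fun N hN x => ?_⟩
      obtain rfl : N = 0 := Nat.le_zero.mp hN
      rw [norm_iteratedFDeriv_zero, pow_zero, mul_one, norm_inv]
      exact inv_anti₀ hε (hl x)
    | succ n ih =>
      obtain ⟨k, C, hC, hb⟩ := ih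
      obtain ⟨k', C', hC', hb'⟩ := hh.norm_iteratedFDeriv_le_uniform (n + 1)
      have hu_smooth : ContDiff ℝ (↑(⊤:ℕ∞)) (fun x => -((h x)⁻¹ * (h x)⁻¹)) :=
        (hsm.mul hsm).neg
      obtain ⟨Cu, hCu0, hbu⟩ : ∃ Cu : ℝ, 0 ≤ Cu ∧ ∀ N ≤ n, ∀ x,
          ‖iteratedFDeriv ℝ N (fun x => -((h x)⁻¹ * (h x)⁻¹)) x‖ ≤
            Cu * (1 + ‖x‖) ^ (k + k) := by
        refine ⟨‖ContinuousLinearMap.mul ℝ ℂ‖ * 2 ^ n * (C * C), by positivity,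
          fun N hN x => ?_⟩
        have hmul := tg_bilin_bound (ContinuousLinearMap.mul ℝ ℂ) hsm hsm hC hC hb hb N hN x
        rw [show (fun x => -((h x)⁻¹ * (h x)⁻¹)) = -(fun x => (h x)⁻¹ * (h x)⁻¹) from rfl,
          iteratedFDeriv_neg_apply, norm_neg]
        exact hmul
      have hsm_h' : ContDiff ℝ (↑(⊤:ℕ∞)) (fderiv ℝ h) :=
        hh.1.fderiv_right (mod_cast le_top)
      have hbh' : ∀ N ≤ n, ∀ x, ‖iteratedFDeriv ℝ N (fderiv ℝ h) x‖ ≤ C' * (1 + ‖x‖) ^ k' := by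
        intro N hN x
        rw [norm_iteratedFDeriv_fderiv]
        exact hb' (N + 1) (by omega) x
      obtain ⟨D, hD0, hcomb⟩ : ∃ D : ℝ, 0 ≤ D ∧ ∀ N ≤ n, ∀ x,
          ‖iteratedFDeriv ℝ N (fun y =>
            (ContinuousLinearMap.lsmul ℝ ℂ (-((h y)⁻¹ * (h y)⁻¹))) (fderiv ℝ h y)) x‖ ≤
            D * (1 + ‖x‖) ^ (k + k + k') :=
        ⟨_, by positivity,
          tg_bilin_bound (ContinuousLinearMap.lsmul ℝ ℂ) hu_smooth hsm_h' hCu0 hC' hbu hbh'⟩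
      refine ⟨max k (k + k + k'), C + D, by linarith, fun N hN x => ?_⟩
      have h1x : (1:ℝ) ≤ 1 + ‖x‖ := by simp [norm_nonneg]
      have hpow : (1 + ‖x‖) ^ k ≤ (1 + ‖x‖) ^ max k (k + k + k') :=
        pow_le_pow_right₀ h1x (le_max_left _ _)
      have hpow2 : (1 + ‖x‖) ^ (k + k + k') ≤ (1 + ‖x‖) ^ max k (k + k + k') :=
        pow_le_pow_right₀ h1x (le_max_right _ _)
      by_cases hN' : N ≤ n
      · calc ‖iteratedFDeriv ℝ N (fun x => (h x)⁻¹) x‖ ≤ C * (1 + ‖x‖) ^ k := hb N hN' x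
          _ ≤ (C + D) * (1 + ‖x‖) ^ max k (k + k + k') :=
              mul_le_mul (by linarith) hpow (by positivity) (by linarith)
      · obtain rfl : N = n + 1 := by omega
        have heq : ‖iteratedFDeriv ℝ (n + 1) (fun x => (h x)⁻¹) x‖
            = ‖iteratedFDeriv ℝ n (fderiv ℝ (fun x => (h x)⁻¹)) x‖ :=
          (norm_iteratedFDeriv_fderiv).symm
        rw [heq, hfd]
        calc ‖iteratedFDeriv ℝ n (fun y =>
              (ContinuousLinearMap.lsmul ℝ ℂ (-((h y)⁻¹ * (h y)⁻¹))) (fderiv ℝ h y)) x‖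
            ≤ D * (1 + ‖x‖) ^ (k + k + k') := hcomb n le_rfl x
          _ ≤ (C + D) * (1 + ‖x‖) ^ max k (k + k + k') :=
              mul_le_mul (by linarith) hpow2 (by positivity) (by linarith)
  refine ⟨hsm, fun n => ?_⟩
  obtain ⟨k, C, hC, hb⟩ := claim n
  exact ⟨k, C, fun x => hb n le_rfl x⟩

end Inv

section FT

open scoped RealInnerProductSpace

variable {V : Type*} [NormedAddCommGroup V] [InnerProductSpace ℝ V] [FiniteDimensional ℝ V]
  [MeasurableSpace V] [BorelSpace V]

open Real in
lemma ft_pderiv (g : 𝓢(V, ℂ)) (v : V) (ξ : V) :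
    FourierTransform.fourierCLE ℂ 𝓢(V, ℂ) (LineDeriv.lineDerivOpCLM ℂ 𝓢(V, ℂ) v g) ξ
      = (2 * π * Complex.I * (⟪v, ξ⟫ : ℂ)) * FourierTransform.fourierCLE ℂ 𝓢(V, ℂ) g ξ := by
  have hT : (inner ℝ · v).HasTemperateGrowth := ((innerSL ℝ).flip v).hasTemperateGrowth
  rw [FourierTransform.fourierCLE_apply, FourierTransform.fourierCLE_apply,
    LineDeriv.lineDerivOpCLM_apply, SchwartzMap.fourier_lineDerivOp_eq, SchwartzMap.smul_apply,
    SchwartzMap.smulLeftCLM_apply_apply hT, real_inner_comm]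
  simp only [smul_eq_mul, Complex.real_smul]
  ring

end FT

open Real in
/-- For `Im λ ≠ 0` and `f` Schwartz: the denominator `4π²·q(ζ) + λ` never vanishes, the
function `ζ ↦ −(Ff)(ζ)/(4π²·q(ζ) + λ)` is Schwartz, and `u := F⁻¹` of it solves
`□u = λu + f`. -/
theorem fourier_solution_minkowski (d : ℕ) (hd : 1 ≤ d)
    (lam : ℂ) (hlam : lam.im ≠ 0) (f : 𝓢(Spacetime d, ℂ)) :
    (∀ ζ : Spacetime d, ((4 * π ^ 2 * minkQ d ζ : ℝ) : ℂ) + lam ≠ 0) ∧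
    ∃ w : 𝓢(Spacetime d, ℂ),
      (∀ ζ : Spacetime d,
        w ζ = -(FourierTransform.fourierCLE ℂ 𝓢(Spacetime d, ℂ) f ζ)
          / (((4 * π ^ 2 * minkQ d ζ : ℝ) : ℂ) + lam)) ∧
      dAlembertian d ((FourierTransform.fourierCLE ℂ 𝓢(Spacetime d, ℂ)).symm w)
        = lam • (FourierTransform.fourierCLE ℂ 𝓢(Spacetime d, ℂ)).symm w + f := by
  have him : ∀ ζ : Spacetime d, (((4 * π ^ 2 * minkQ d ζ : ℝ) : ℂ) + lam).im = lam.im := by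
    intro ζ; rw [Complex.add_im, Complex.ofReal_im, zero_add]
  have hε : 0 < |lam.im| := abs_pos.mpr hlam
  have hl : ∀ ζ : Spacetime d, |lam.im| ≤ ‖((4 * π ^ 2 * minkQ d ζ : ℝ) : ℂ) + lam‖ := by
    intro ζ
    rw [← him ζ]
    exact (Complex.abs_im_le_norm _)
  have hne : ∀ ζ : Spacetime d, ((4 * π ^ 2 * minkQ d ζ : ℝ) : ℂ) + lam ≠ 0 := by
    intro ζ h0
    have := hl ζ
    rw [h0, norm_zero] at this
    linarith
  -- temperate growth of the denominator
  have tgc : ∀ i : Fin (d + 1), Function.HasTemperateGrowth (fun ζ : Spacetime d => ζ i) :=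
    fun i => (PiLp.proj 2 (fun _ : Fin (d + 1) => ℝ) i).hasTemperateGrowth
  have tgsq : ∀ i : Fin (d + 1), Function.HasTemperateGrowth
      (fun ζ : Spacetime d => ζ i * ζ i) :=
    fun i => tg_bilin (ContinuousLinearMap.mul ℝ ℝ) (tgc i) (tgc i)
  have tgsum : Function.HasTemperateGrowth
      (fun ζ : Spacetime d => ∑ j : Fin d, ζ j.succ * ζ j.succ) :=
    tg_sum Finset.univ _ (fun j _ => tgsq j.succ)
  have tgqr : Function.HasTemperateGrowth
      (fun ζ : Spacetime d => ζ 0 * ζ 0 + -(∑ j : Fin d, ζ j.succ * ζ j.succ)) :=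
    tg_add (tgsq 0) (tg_neg tgsum)
  have tgs : Function.HasTemperateGrowth
      (fun ζ : Spacetime d => (ContinuousLinearMap.mul ℝ ℝ) (4 * π ^ 2 : ℝ)
        (ζ 0 * ζ 0 + -(∑ j : Fin d, ζ j.succ * ζ j.succ))) :=
    tg_bilin (ContinuousLinearMap.mul ℝ ℝ) (.const _) tgqr
  have tgC : Function.HasTemperateGrowth
      (fun ζ : Spacetime d => (Complex.ofRealCLM ((4 * π ^ 2 : ℝ) *
        (ζ 0 * ζ 0 + -(∑ j : Fin d, ζ j.succ * ζ j.succ))))) :=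
    tg_comp_clm Complex.ofRealCLM tgs
  have tgh : Function.HasTemperateGrowth
      (fun ζ : Spacetime d => ((4 * π ^ 2 * minkQ d ζ : ℝ) : ℂ) + lam) := by
    have h1 := tg_add tgC (Function.HasTemperateGrowth.const lam)
    have hfun : (fun ζ : Spacetime d => (Complex.ofRealCLM ((4 * π ^ 2 : ℝ) *
          (ζ 0 * ζ 0 + -(∑ j : Fin d, ζ j.succ * ζ j.succ))) + lam))
        = (fun ζ : Spacetime d => ((4 * π ^ 2 * minkQ d ζ : ℝ) : ℂ) + lam) := by
      funext ζ
      simp [minkQ, pow_two, sub_eq_add_neg]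
    rwa [hfun] at h1
  have tgg : Function.HasTemperateGrowth
      (fun ζ : Spacetime d => -((((4 * π ^ 2 * minkQ d ζ : ℝ) : ℂ) + lam)⁻¹)) :=
    tg_neg (tg_inv tgh hε hl)
  -- the Schwartz function w
  set Ff := FourierTransform.fourierCLE ℂ 𝓢(Spacetime d, ℂ) f with hFf
  set w : 𝓢(Spacetime d, ℂ) :=
    SchwartzMap.bilinLeftCLM (ContinuousLinearMap.mul ℝ ℂ) tgg Ff with hw_def
  have hw : ∀ ζ : Spacetime d,
      w ζ = -(Ff ζ) / (((4 * π ^ 2 * minkQ d ζ : ℝ) : ℂ) + lam) := by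
    intro ζ
    show Ff ζ * -((((4 * π ^ 2 * minkQ d ζ : ℝ) : ℂ) + lam)⁻¹) = _
    rw [div_eq_mul_inv]
    ring
  refine ⟨hne, w, hw, ?_⟩
  set u := (FourierTransform.fourierCLE ℂ 𝓢(Spacetime d, ℂ)).symm w with hu
  apply (FourierTransform.fourierCLE ℂ 𝓢(Spacetime d, ℂ)).injective
  rw [map_add, _root_.map_smul, (FourierTransform.fourierCLE ℂ 𝓢(Spacetime d, ℂ)).apply_symm_apply]
  have hDa : dAlembertian d u =
      (LineDeriv.lineDerivOpCLM ℂ 𝓢(Spacetime d, ℂ) (EuclideanSpace.single 0 1 : Spacetime d))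
        ((LineDeriv.lineDerivOpCLM ℂ 𝓢(Spacetime d, ℂ) (EuclideanSpace.single 0 1 : Spacetime d)) u)
      - ∑ j : Fin d, (LineDeriv.lineDerivOpCLM ℂ 𝓢(Spacetime d, ℂ) (EuclideanSpace.single j.succ 1 : Spacetime d))
          ((LineDeriv.lineDerivOpCLM ℂ 𝓢(Spacetime d, ℂ) (EuclideanSpace.single j.succ 1 : Spacetime d)) u) := by
    simp [dAlembertian, ContinuousLinearMap.sub_apply, ContinuousLinearMap.sum_apply,
      ContinuousLinearMap.comp_apply]
  rw [hDa, map_sub, map_sum]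
  ext ζ
  rw [SchwartzMap.sub_apply, SchwartzMap.add_apply, SchwartzMap.smul_apply]
  have hsum : ∀ (g : Fin d → 𝓢(Spacetime d, ℂ)),
      (∑ j : Fin d, g j) ζ = ∑ j : Fin d, g j ζ := by
    intro g
    rw [SchwartzMap.sum_apply]
  rw [hsum]
  have hFuζ : FourierTransform.fourierCLE ℂ 𝓢(Spacetime d, ℂ) u ζ = w ζ := by
    rw [hu, (FourierTransform.fourierCLE ℂ 𝓢(Spacetime d, ℂ)).apply_symm_apply]
  have key : ∀ (i : Fin (d + 1)),
      FourierTransform.fourierCLE ℂ 𝓢(Spacetime d, ℂ) ((LineDeriv.lineDerivOpCLM ℂ 𝓢(Spacetime d, ℂ) (EuclideanSpace.single i 1 : Spacetime d))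
        ((LineDeriv.lineDerivOpCLM ℂ 𝓢(Spacetime d, ℂ) (EuclideanSpace.single i 1 : Spacetime d)) u)) ζ
      = -((2 * (π : ℂ) * ((ζ i : ℝ) : ℂ)) ^ 2) * w ζ := by
    intro i
    rw [ft_pderiv, ft_pderiv, hFuζ]
    have hin : (inner ℝ (EuclideanSpace.single i (1:ℝ)) ζ : ℝ) = ζ i := by
      rw [EuclideanSpace.inner_single_left]
      simp
    rw [hin]
    linear_combination (2 * (π : ℂ) * ((ζ i : ℝ) : ℂ)) ^ 2 * (w ζ) * Complex.I_sq
  rw [key 0]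
  rw [Finset.sum_congr rfl (fun j _ => key j.succ)]
  rw [← Finset.sum_mul]
  rw [hw ζ]
  have hM : ((4 * π ^ 2 * minkQ d ζ : ℝ) : ℂ)
      = 4 * (π : ℂ) ^ 2 * (((ζ 0 : ℝ) : ℂ) ^ 2 - ∑ j : Fin d, ((ζ j.succ : ℝ) : ℂ) ^ 2) := by
    rw [minkQ]
    push_cast
    ring
  have hne' := hne ζ
  rw [hM] at hne' ⊢
  rw [smul_eq_mul]
  field_simp
  have hcoe : ⇑Ff = FourierTransform.fourier (⇑f) := rfl
  rw [hcoe]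
  have hS : ∑ x : Fin d, -(2 ^ 2 * (π:ℂ) ^ 2 * ((ζ x.succ : ℝ):ℂ) ^ 2)
      = -((∑ x : Fin d, ((ζ x.succ : ℝ):ℂ)^2) * (4*(π:ℂ)^2)) := by
    rw [Finset.sum_mul, ← Finset.sum_neg_distrib]
    exact Finset.sum_congr rfl fun x _ => by ring
  have hD : (π:ℂ) ^ 2 * 4 * (((ζ 0 : ℝ) : ℂ) ^ 2 - ∑ j : Fin d, ((ζ j.succ : ℝ) : ℂ) ^ 2) + lam ≠ 0 := by
    rw [mul_comm ((π:ℂ) ^ 2)]; exact hne'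
  rw [hS]
  field_simp
  ring
end

section
/- Let d ≥ 1 and λ ∈ ℂ with Im λ ≠ 0. Then the map sending h ∈ 𝓢(ℝ^{1+d}, ℂ) to the function (τ, ξ) ↦ h(τ, ξ)/(τ² − ‖ξ‖² + λ) is a well-defined continuous linear map from 𝓢(ℝ^{1+d}, ℂ) to itself. -/
open MeasureTheory SchwartzMap Complex
open scoped SchwartzMap
open scoped ContDiff

set_option linter.unusedSectionVars false

section Aux

variable {E : Type*} [NormedAddCommGroup E] [NormedSpace ℝ E]


variable {E : Type*} [NormedAddCommGroup E] [NormedSpace ℝ E]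

private lemma one_le_one_add_norm (x : E) : (1:ℝ) ≤ 1 + ‖x‖ := by
  linarith [norm_nonneg x]

private lemma htg_add {f g : E → ℂ} (hf : Function.HasTemperateGrowth f)
    (hg : Function.HasTemperateGrowth g) :
    Function.HasTemperateGrowth (fun x => f x + g x) := by
  refine ⟨hf.1.add hg.1, fun n => ?_⟩
  obtain ⟨k1, C1, hC1, h1⟩ := hf.norm_iteratedFDeriv_le_uniform n
  obtain ⟨k2, C2, hC2, h2⟩ := hg.norm_iteratedFDeriv_le_uniform n
  refine ⟨k1 + k2, C1 + C2, fun x => ?_⟩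
  have e : iteratedFDeriv ℝ n (fun x => f x + g x) x
      = iteratedFDeriv ℝ n f x + iteratedFDeriv ℝ n g x :=
    iteratedFDeriv_add_apply (hf.1.contDiffAt.of_le (mod_cast le_top)) (hg.1.contDiffAt.of_le (mod_cast le_top))
  have hx : (1:ℝ) ≤ 1 + ‖x‖ := one_le_one_add_norm x
  calc ‖iteratedFDeriv ℝ n (fun x => f x + g x) x‖
      ≤ ‖iteratedFDeriv ℝ n f x‖ + ‖iteratedFDeriv ℝ n g x‖ := by
        rw [e]; exact norm_add_le _ _
    _ ≤ C1 * (1 + ‖x‖) ^ k1 + C2 * (1 + ‖x‖) ^ k2 := by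
        gcongr; exacts [h1 n le_rfl x, h2 n le_rfl x]
    _ ≤ C1 * (1 + ‖x‖) ^ (k1 + k2) + C2 * (1 + ‖x‖) ^ (k1 + k2) := by
        have p1 : (1 + ‖x‖) ^ k1 ≤ (1 + ‖x‖) ^ (k1 + k2) :=
          pow_le_pow_right₀ hx (Nat.le_add_right _ _)
        have p2 : (1 + ‖x‖) ^ k2 ≤ (1 + ‖x‖) ^ (k1 + k2) :=
          pow_le_pow_right₀ hx (Nat.le_add_left _ _)
        have q1 := mul_le_mul_of_nonneg_left p1 hC1
        have q2 := mul_le_mul_of_nonneg_left p2 hC2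
        linarith
    _ = (C1 + C2) * (1 + ‖x‖) ^ (k1 + k2) := by ring

private lemma htg_neg {f : E → ℂ} (hf : Function.HasTemperateGrowth f) :
    Function.HasTemperateGrowth (fun x => -(f x)) := by
  refine ⟨hf.1.neg, fun n => ?_⟩
  obtain ⟨k, C, h⟩ := hf.2 n
  refine ⟨k, C, fun x => ?_⟩
  have e : iteratedFDeriv ℝ n (fun x => -(f x)) x = -iteratedFDeriv ℝ n f x :=
    iteratedFDeriv_neg_apply
  rw [e, norm_neg]; exact h x

private lemma htg_mul {f g : E → ℂ} (hf : Function.HasTemperateGrowth f)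
    (hg : Function.HasTemperateGrowth g) :
    Function.HasTemperateGrowth (fun x => f x * g x) := by
  refine ⟨hf.1.mul hg.1, fun n => ?_⟩
  obtain ⟨k1, C1, hC1, h1⟩ := hf.norm_iteratedFDeriv_le_uniform n
  obtain ⟨k2, C2, hC2, h2⟩ := hg.norm_iteratedFDeriv_le_uniform n
  refine ⟨k1 + k2, 2 ^ n * C1 * C2, fun x => ?_⟩
  have hx : (1:ℝ) ≤ 1 + ‖x‖ := one_le_one_add_norm x
  calc ‖iteratedFDeriv ℝ n (fun x => f x * g x) x‖
      ≤ ∑ i ∈ Finset.range (n + 1),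
          (n.choose i : ℝ) * ‖iteratedFDeriv ℝ i f x‖ * ‖iteratedFDeriv ℝ (n - i) g x‖ :=
        norm_iteratedFDeriv_mul_le hf.1 hg.1 x (by exact_mod_cast le_top)
    _ ≤ ∑ i ∈ Finset.range (n + 1),
          (n.choose i : ℝ) * (C1 * (1 + ‖x‖) ^ k1) * (C2 * (1 + ‖x‖) ^ k2) := by
        refine Finset.sum_le_sum fun i hi => ?_
        have hi' : i ≤ n := Finset.mem_range_succ_iff.mp hi
        gcongr
        · exact h1 i hi' x
        · exact h2 (n - i) (Nat.sub_le n i) x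
    _ = (∑ i ∈ Finset.range (n + 1), (n.choose i : ℝ)) *
          (C1 * (1 + ‖x‖) ^ k1 * (C2 * (1 + ‖x‖) ^ k2)) := by
        rw [Finset.sum_mul]; exact Finset.sum_congr rfl fun i _ => by ring
    _ = 2 ^ n * C1 * C2 * (1 + ‖x‖) ^ (k1 + k2) := by
        have hs : (∑ i ∈ Finset.range (n + 1), (n.choose i : ℝ)) = 2 ^ n := by
          exact_mod_cast congrArg (Nat.cast : ℕ → ℝ) (Nat.sum_range_choose n)
        rw [hs, pow_add]; ring


private lemma htg_inv {q : E → ℂ} (hq : Function.HasTemperateGrowth q) {ε : ℝ}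
    (hε : 0 < ε) (hbd : ∀ x, ε ≤ ‖q x‖) :
    Function.HasTemperateGrowth (fun x => (q x)⁻¹) := by
  have hq0 : ∀ x, q x ≠ 0 := by
    intro x hx
    have := hbd x; rw [hx, norm_zero] at this; linarith
  have hsm : ContDiff ℝ ∞ (fun x => (q x)⁻¹) := hq.1.inv hq0
  have hdq : Differentiable ℝ q := hq.1.differentiable (by simp)
  -- the formula for the derivative of the inverse
  have hfd : fderiv ℝ (fun x => (q x)⁻¹)
      = fun y => (-((q y)⁻¹ * (q y)⁻¹)) • fderiv ℝ q y := by
    funext y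
    have h1 : HasFDerivAt (fun x => (q x)⁻¹)
        ((-ContinuousLinearMap.mulLeftRight ℝ ℂ (q y)⁻¹ (q y)⁻¹).comp (fderiv ℝ q y)) y :=
      (hasFDerivAt_inv' (hq0 y)).comp y (hdq y).hasFDerivAt
    rw [h1.fderiv]
    ext v
    simp only [ContinuousLinearMap.coe_comp', Function.comp_apply,
      ContinuousLinearMap.neg_apply, ContinuousLinearMap.mulLeftRight_apply,
      ContinuousLinearMap.smul_apply, smul_eq_mul]
    ring
  have hsmq : ContDiff ℝ ∞ (fun y => -((q y)⁻¹ * (q y)⁻¹)) := (hsm.mul hsm).neg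
  have hdq' : ContDiff ℝ ∞ (fderiv ℝ q) := hq.1.fderiv_right (by simp)
  refine ⟨hsm, fun n => ?_⟩
  suffices key : ∀ n : ℕ, ∃ (k : ℕ) (C : ℝ), 0 ≤ C ∧ ∀ i ≤ n, ∀ x,
      ‖iteratedFDeriv ℝ i (fun x => (q x)⁻¹) x‖ ≤ C * (1 + ‖x‖) ^ k by
    obtain ⟨k, C, _, h⟩ := key n
    exact ⟨k, C, h n le_rfl⟩
  intro n
  induction n with
  | zero =>
    refine ⟨0, ε⁻¹, by positivity, ?_⟩
    intro i hi x
    obtain rfl : i = 0 := Nat.le_zero.mp hi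
    rw [norm_iteratedFDeriv_zero, pow_zero, mul_one, norm_inv]
    exact inv_anti₀ hε (hbd x)
  | succ n ih =>
    obtain ⟨k, C, hC, hI⟩ := ih
    obtain ⟨k', C', hC', hQ⟩ := hq.norm_iteratedFDeriv_le_uniform (n + 1)
    refine ⟨2 * k + k', C + 4 ^ n * C ^ 2 * C', by positivity, ?_⟩
    intro i hi x
    have hx : (1:ℝ) ≤ 1 + ‖x‖ := one_le_one_add_norm x
    have hx0 : (0:ℝ) < 1 + ‖x‖ := lt_of_lt_of_le one_pos hx
    rcases Nat.lt_succ_iff_lt_or_eq.mp (Nat.lt_succ_of_le hi) with h | rfl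
    · -- i ≤ n : use the inductive bound
      have := hI i (Nat.lt_succ_iff.mp h) x
      refine this.trans ?_
      have p1 : (1 + ‖x‖) ^ k ≤ (1 + ‖x‖) ^ (2 * k + k') :=
        pow_le_pow_right₀ hx (by omega)
      have q1 := mul_le_mul_of_nonneg_left p1 hC
      nlinarith [pow_nonneg (le_of_lt hx0) (2 * k + k'),
        mul_nonneg (mul_nonneg (mul_nonneg (by positivity : (0:ℝ) ≤ (4:ℝ) ^ n)
          (mul_self_nonneg C)) hC') (pow_nonneg (le_of_lt hx0) (2 * k + k'))]
    · -- i = n + 1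
      -- bound on the derivatives of the scalar factor
      have hu : ∀ j ≤ n, ∀ y : E, ‖iteratedFDeriv ℝ j (fun y => -((q y)⁻¹ * (q y)⁻¹)) y‖
          ≤ 2 ^ n * C ^ 2 * (1 + ‖y‖) ^ (2 * k) := by
        intro j hj y
        have hy : (1:ℝ) ≤ 1 + ‖y‖ := one_le_one_add_norm y
        have e1 : iteratedFDeriv ℝ j (fun y => -((q y)⁻¹ * (q y)⁻¹)) y
            = - iteratedFDeriv ℝ j (fun y => (q y)⁻¹ * (q y)⁻¹) y := by
          rw [show (fun y => -((q y)⁻¹ * (q y)⁻¹))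
            = -(fun y => (q y)⁻¹ * (q y)⁻¹) from rfl]
          exact iteratedFDeriv_neg_apply
        rw [e1, norm_neg]
        calc ‖iteratedFDeriv ℝ j (fun y => (q y)⁻¹ * (q y)⁻¹) y‖
            ≤ ∑ l ∈ Finset.range (j + 1), (j.choose l : ℝ) *
              ‖iteratedFDeriv ℝ l (fun y => (q y)⁻¹) y‖ *
              ‖iteratedFDeriv ℝ (j - l) (fun y => (q y)⁻¹) y‖ :=
            norm_iteratedFDeriv_mul_le hsm hsm y (mod_cast le_top)
          _ ≤ ∑ l ∈ Finset.range (j + 1), (j.choose l : ℝ) *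
              (C * (1 + ‖y‖) ^ k) * (C * (1 + ‖y‖) ^ k) := by
            refine Finset.sum_le_sum fun l hl => ?_
            have hl' : l ≤ j := Finset.mem_range_succ_iff.mp hl
            gcongr
            · exact hI l (hl'.trans hj) y
            · exact hI (j - l) ((Nat.sub_le j l).trans hj) y
          _ = (∑ l ∈ Finset.range (j + 1), (j.choose l : ℝ)) *
              (C * (1 + ‖y‖) ^ k * (C * (1 + ‖y‖) ^ k)) := by
            rw [Finset.sum_mul]; exact Finset.sum_congr rfl fun l _ => by ring
          _ ≤ 2 ^ n * C ^ 2 * (1 + ‖y‖) ^ (2 * k) := by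
            have hs : (∑ l ∈ Finset.range (j + 1), (j.choose l : ℝ)) = 2 ^ j := by
              exact_mod_cast congrArg (Nat.cast : ℕ → ℝ) (Nat.sum_range_choose j)
            rw [hs, show 2 * k = k + k from by ring, pow_add]
            have : (2:ℝ) ^ j ≤ 2 ^ n := pow_le_pow_right₀ one_le_two hj
            nlinarith [pow_nonneg (le_of_lt (lt_of_lt_of_le one_pos hy)) k,
              mul_self_nonneg (C * (1 + ‖y‖) ^ k)]
      -- main computation
      rw [← norm_iteratedFDeriv_fderiv, hfd]
      calc ‖iteratedFDeriv ℝ n (fun y => (-((q y)⁻¹ * (q y)⁻¹)) • fderiv ℝ q y) x‖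
          ≤ ∑ i ∈ Finset.range (n + 1), (n.choose i : ℝ) *
            ‖iteratedFDeriv ℝ i (fun y => -((q y)⁻¹ * (q y)⁻¹)) x‖ *
            ‖iteratedFDeriv ℝ (n - i) (fderiv ℝ q) x‖ :=
          norm_iteratedFDeriv_smul_le hsmq hdq' x (mod_cast le_top)
        _ ≤ ∑ i ∈ Finset.range (n + 1), (n.choose i : ℝ) *
            (2 ^ n * C ^ 2 * (1 + ‖x‖) ^ (2 * k)) * (C' * (1 + ‖x‖) ^ k') := by
          refine Finset.sum_le_sum fun i hi' => ?_
          have hi'' : i ≤ n := Finset.mem_range_succ_iff.mp hi'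
          gcongr
          · exact hu i hi'' x
          · rw [norm_iteratedFDeriv_fderiv]
            exact hQ (n - i + 1) (by omega) x
        _ = (∑ i ∈ Finset.range (n + 1), (n.choose i : ℝ)) *
            (2 ^ n * C ^ 2 * (1 + ‖x‖) ^ (2 * k) * (C' * (1 + ‖x‖) ^ k')) := by
          rw [Finset.sum_mul]; exact Finset.sum_congr rfl fun i _ => by ring
        _ ≤ (C + 4 ^ n * C ^ 2 * C') * (1 + ‖x‖) ^ (2 * k + k') := by
          have hs : (∑ i ∈ Finset.range (n + 1), (n.choose i : ℝ)) = 2 ^ n := by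
            exact_mod_cast congrArg (Nat.cast : ℕ → ℝ) (Nat.sum_range_choose n)
          have hp : (0:ℝ) ≤ (1 + ‖x‖) ^ (2 * k) * (1 + ‖x‖) ^ k' := by positivity
          rw [hs, pow_add]
          calc (2:ℝ) ^ n * (2 ^ n * C ^ 2 * (1 + ‖x‖) ^ (2 * k) * (C' * (1 + ‖x‖) ^ k'))
              = (4 ^ n * C ^ 2 * C') * ((1 + ‖x‖) ^ (2 * k) * (1 + ‖x‖) ^ k') := by
                rw [show (4:ℝ) ^ n = 2 ^ n * 2 ^ n from by rw [← mul_pow]; norm_num]; ring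
            _ ≤ (C + 4 ^ n * C ^ 2 * C') * ((1 + ‖x‖) ^ (2 * k) * (1 + ‖x‖) ^ k') :=
                mul_le_mul_of_nonneg_right (by linarith) hp

private lemma htg_sum {ι : Type*} (s : Finset ι) (f : ι → E → ℂ)
    (h : ∀ i ∈ s, Function.HasTemperateGrowth (f i)) :
    Function.HasTemperateGrowth (fun x => ∑ i ∈ s, f i x) := by
  classical
  induction s using Finset.cons_induction with
  | empty => simp only [Finset.sum_empty]; exact .const 0
  | cons i s hi ih =>
    simp only [Finset.sum_cons]
    exact htg_add (h i (Finset.mem_cons_self i s))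
      (ih fun j hj => h j (Finset.mem_cons_of_mem hj))

end Aux

/-- For `Im λ ≠ 0`, division by `τ² − ‖ξ‖² + λ` is a well-defined continuous linear map
of the Schwartz space `𝓢(ℝ × ℝ^d, ℂ)` to itself. -/
theorem division_by_symbol_CLM (d : ℕ) (hd : 1 ≤ d)
    (lam : ℂ) (hlam : lam.im ≠ 0) :
    ∃ T : 𝓢(ℝ × EuclideanSpace ℝ (Fin d), ℂ) →L[ℂ] 𝓢(ℝ × EuclideanSpace ℝ (Fin d), ℂ),
      ∀ (h : 𝓢(ℝ × EuclideanSpace ℝ (Fin d), ℂ)) (p : ℝ × EuclideanSpace ℝ (Fin d)),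
        T h p = h p / (((p.1 ^ 2 - ‖p.2‖ ^ 2 : ℝ) : ℂ) + lam) := by
  set E' := ℝ × EuclideanSpace ℝ (Fin d)
  set q : E' → ℂ := fun x => ((x.1 ^ 2 - ‖x.2‖ ^ 2 : ℝ) : ℂ) + lam with hqdef
  -- the coordinate CLMs
  set c0 : E' →L[ℝ] ℂ :=
    Complex.ofRealCLM.comp (ContinuousLinearMap.fst ℝ ℝ (EuclideanSpace ℝ (Fin d))) with hc0
  set c : Fin d → (E' →L[ℝ] ℂ) := fun i =>
    Complex.ofRealCLM.comp ((EuclideanSpace.proj i).comp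
      (ContinuousLinearMap.snd ℝ ℝ (EuclideanSpace ℝ (Fin d)))) with hc
  have hq_eq : q = fun x =>
      (c0 x * c0 x + ∑ i : Fin d, -(c i x * c i x)) + lam := by
    funext x
    have hns : (‖x.2‖ : ℝ) ^ 2 = ∑ i : Fin d, (x.2 i) ^ 2 := by
      rw [EuclideanSpace.norm_eq]
      rw [Real.sq_sqrt (by positivity)]
      exact Finset.sum_congr rfl fun i _ => by rw [Real.norm_eq_abs, _root_.sq_abs]
    have h0 : c0 x = (x.1 : ℂ) := rfl
    have hcx : ∀ i, c i x = (x.2 i : ℂ) := fun i => rfl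
    simp only [hqdef, h0, hcx, hns]
    push_cast
    rw [Finset.sum_congr rfl fun i (_ : i ∈ Finset.univ) =>
      show -((x.2 i : ℂ) * (x.2 i : ℂ)) = -((x.2 i : ℂ) ^ 2) by ring]
    rw [Finset.sum_neg_distrib]
    ring
  have hq_temp : Function.HasTemperateGrowth q := by
    rw [hq_eq]
    exact htg_add (htg_add (htg_mul c0.hasTemperateGrowth c0.hasTemperateGrowth)
      (htg_sum _ _ fun i _ => htg_neg
        (htg_mul (c i).hasTemperateGrowth (c i).hasTemperateGrowth)))
      (.const lam)
  have him : ∀ x, (q x).im = lam.im := by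
    intro x
    simp [hqdef, ← Complex.ofReal_pow]
  have hq_lb : ∀ x, |lam.im| ≤ ‖q x‖ := by
    intro x
    rw [← him x]
    exact Complex.abs_im_le_norm (q x)
  have hε : 0 < |lam.im| := abs_pos.mpr hlam
  have hg : Function.HasTemperateGrowth (fun x => (q x)⁻¹) := htg_inv hq_temp hε hq_lb
  have hq0 : ∀ x, q x ≠ 0 := by
    intro x hx
    have := hq_lb x
    rw [hx, norm_zero] at this
    linarith
  set Tr : 𝓢(E', ℂ) →L[ℝ] 𝓢(E', ℂ) :=
    SchwartzMap.bilinLeftCLM (ContinuousLinearMap.mul ℝ ℂ) hg with hTr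
  have hTr_apply : ∀ (f : 𝓢(E', ℂ)) (x : E'), Tr f x = f x * (q x)⁻¹ := fun f x => rfl
  refine ⟨{ toFun := fun f => Tr f
            map_add' := fun f h => map_add Tr f h
            map_smul' := fun a f => ?_
            cont := Tr.continuous }, ?_⟩
  · apply SchwartzMap.ext
    intro x
    simp only [hTr_apply, SchwartzMap.smul_apply, RingHom.id_apply, smul_eq_mul]
    ring
  · intro h p
    show Tr h p = _
    rw [hTr_apply, div_eq_mul_inv]
end
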